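/- Let (X,d) be a complete metric space, let f : X → (−∞,∞] be lower semicontinuous, and let x̄ be a point with f(x̄) finite at which the slope is zero: |∇f|(x̄) = 0. Let M be an identifiable set for f at x̄ and let ε ≥ 0 be strictly less than the modulus of identifiability of M at x̄. Then for any sequence of points x_r → x̄ satisfying f(x_r) → f(x̄), there exists a sequence of points v_r → x̄ with v_r ∈ M for all r, f(v_r) → f(x̄), and f(v_r) + ε·d(v_r, x_r) ≤ f(x_r) for all sufficiently large r. -/

import Mathlib

open Filter Topology
open scoped ENNReal NNReal

/-- The slope `|∇f|(x)`: the infimum of all `δ > 0` such that `x` is a local minimizer of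
`f + δ·d(·,x)`; it equals `∞` at points where `f x = ⊤`. -/
noncomputable def slopeM {X : Type*} [MetricSpace X] (f : X → EReal) (x : X) : ℝ≥0∞ :=
  if f x = ⊤ then ⊤
  else sInf {δ : ℝ≥0∞ | ∃ c : ℝ, 0 < c ∧ δ = ENNReal.ofReal c ∧
    ∀ᶠ z in 𝓝 x, f x ≤ f z + ((c * dist z x : ℝ) : EReal)}

/-- The modulus of identifiability: `liminf_{x → xbar, x ∉ M, f(x) → f(xbar)} |∇f|(x)`. -/
noncomputable def identModulus {X : Type*} [MetricSpace X] (f : X → EReal) (M : Set X)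
    (xbar : X) : ℝ≥0∞ :=
  Filter.liminf (slopeM f) (𝓝[Mᶜ] xbar ⊓ Filter.comap f (𝓝 (f xbar)))

/-- `M` is an identifiable set for `f` at `xbar`: it is closed, contains `xbar`, and the
modulus of identifiability is strictly positive. -/
def Identifiable {X : Type*} [MetricSpace X] (f : X → EReal) (M : Set X) (xbar : X) : Prop :=
  IsClosed M ∧ xbar ∈ M ∧ 0 < identModulus f M xbar

lemma ekeland_real {Y : Type*} [MetricSpace Y] [CompleteSpace Y]
    (g : Y → ℝ) (hg : LowerSemicontinuous g) (B : ℝ) (hB : ∀ z, B ≤ g z)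
    (c : ℝ) (hc : 0 < c) (x0 : Y) :
    ∃ v : Y, g v + c * dist v x0 ≤ g x0 ∧ ∀ z : Y, g z + c * dist z v ≤ g v → z = v := by
  classical
  set S : Y → Set Y := fun y => {z | g z + c * dist z y ≤ g y} with hS
  have hself : ∀ y, y ∈ S y := by
    intro y; simp [hS]
  have htrans : ∀ y z w, z ∈ S y → w ∈ S z → w ∈ S y := by
    intro y z w hz hw
    simp only [hS, Set.mem_setOf_eq] at *
    have htri := dist_triangle w z y
    nlinarith [dist_nonneg (x := w) (y := z), dist_nonneg (x := z) (y := y)]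
  have hSclosed : ∀ y, IsClosed (S y) := by
    intro y
    have : LowerSemicontinuous fun z => g z + c * dist z y := by
      apply LowerSemicontinuous.add hg
      exact (Continuous.lowerSemicontinuous (by continuity))
    exact this.isClosed_preimage (g y)
  -- infimum over S y
  set m : Y → ℝ := fun y => ⨅ z : S y, g z.1 with hm
  have hbdd : ∀ y, BddBelow (Set.range fun z : S y => g z.1) := by
    intro y; exact ⟨B, by rintro t ⟨z, rfl⟩; exact hB _⟩
  have hne : ∀ y, Nonempty (S y) := fun y => ⟨⟨y, hself y⟩⟩
  have hm_le' : ∀ y z, z ∈ S y → m y ≤ g z := fun y z hz => by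
    haveI := hne y; exact ciInf_le (hbdd y) ⟨z, hz⟩
  have hm_le : ∀ y, m y ≤ g y := fun y => hm_le' y y (hself y)
  have key : ∀ y : Y, ∃ z, z ∈ S y ∧ g z ≤ (g y + m y) / 2 := by
    intro y
    rcases eq_or_lt_of_le (hm_le y) with h | h
    · exact ⟨y, hself y, by linarith⟩
    · haveI := hne y
      obtain ⟨⟨z, hz⟩, hz2⟩ := exists_lt_of_ciInf_lt (show m y < (g y + m y) / 2 by linarith)
      exact ⟨z, hz, hz2.le⟩
  choose next hnext1 hnext2 using key
  set u : ℕ → Y := fun n => Nat.rec x0 (fun _ y => next y) n with hu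
  have hus : ∀ n, u (n + 1) = next (u n) := fun n => rfl
  have hstep : ∀ n, u (n + 1) ∈ S (u n) := fun n => hnext1 (u n)
  have hchain : ∀ n k, u (n + k) ∈ S (u n) := by
    intro n k
    induction k with
    | zero => exact hself _
    | succ k ih => exact htrans _ _ _ ih (hstep (n + k))
  have hSsub : ∀ n, S (u (n + 1)) ⊆ S (u n) := fun n z hz => htrans _ _ _ (hstep n) hz
  set a : ℕ → ℝ := fun n => g (u n) - m (u n) with ha
  have ha_nonneg : ∀ n, 0 ≤ a n := fun n => by have := hm_le (u n); simp [ha]; linarith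
  have ha_half : ∀ n, a (n + 1) ≤ a n / 2 := by
    intro n
    have h1 : g (u (n + 1)) ≤ (g (u n) + m (u n)) / 2 := hnext2 (u n)
    have h2 : m (u n) ≤ m (u (n + 1)) := by
      haveI := hne (u (n+1)); exact le_ciInf fun z => hm_le' _ _ (hSsub n z.2)
    simp only [ha]; linarith
  have ha_geom : ∀ n, a n ≤ a 0 * (1 / 2) ^ n := by
    intro n
    induction n with
    | zero => simp
    | succ n ih =>
      have := ha_half n
      have h2 : a n / 2 ≤ a 0 * (1 / 2) ^ n / 2 := by linarith
      calc a (n + 1) ≤ a n / 2 := this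
        _ ≤ a 0 * (1 / 2) ^ n / 2 := h2
        _ = a 0 * (1 / 2) ^ (n + 1) := by ring
  have hdistS : ∀ n z, z ∈ S (u n) → dist z (u n) ≤ a n / c := by
    intro n z hz
    have h1 : g z + c * dist z (u n) ≤ g (u n) := hz
    have h2 : m (u n) ≤ g z := hm_le' _ _ hz
    rw [le_div_iff₀ hc]
    simp only [ha] at *
    nlinarith
  have hcauchy : CauchySeq u := by
    apply cauchySeq_of_le_geometric (r := 1 / 2) (C := a 0 / c) (by norm_num)
    intro n
    have h1 : dist (u (n + 1)) (u n) ≤ a n / c := hdistS n _ (hstep n)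
    rw [dist_comm]
    calc dist (u (n + 1)) (u n) ≤ a n / c := h1
      _ ≤ a 0 * (1 / 2) ^ n / c := by
          exact (div_le_div_iff_of_pos_right hc).2 (ha_geom n)
      _ = a 0 / c * (1 / 2) ^ n := by ring
  obtain ⟨v, hv⟩ := cauchySeq_tendsto_of_complete hcauchy
  have hvS : ∀ n, v ∈ S (u n) := by
    intro n
    have htd : Tendsto (fun k => u (n + k)) atTop (𝓝 v) :=
      hv.comp (tendsto_atTop_mono (fun k => Nat.le_add_left k n)
        (by exact tendsto_id (α := ℕ)) |>.congr (fun k => rfl))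
    exact (hSclosed (u n)).mem_of_tendsto htd (Filter.Eventually.of_forall fun k => hchain n k)
  refine ⟨v, hvS 0, ?_⟩
  intro z hz
  have hzn : ∀ n, z ∈ S (u n) := fun n => htrans _ _ _ (hvS n) hz
  have hbound : ∀ n, dist z v ≤ a n / c + dist (u n) v := by
    intro n
    have := hdistS n z (hzn n)
    have htri := dist_triangle z (u n) v
    linarith
  have hto : Tendsto (fun n => a n / c + dist (u n) v) atTop (𝓝 0) := by
    have h1 : Tendsto a atTop (𝓝 0) := by
      apply squeeze_zero ha_nonneg ha_geom ?_
      simpa using tendsto_const_nhds.mul (tendsto_pow_atTop_nhds_zero_of_lt_one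
        (by norm_num) (by norm_num : (1:ℝ)/2 < 1))
    have h2 : Tendsto (fun n => dist (u n) v) atTop (𝓝 0) := by
      rw [← tendsto_iff_dist_tendsto_zero] at *
      exact hv
    simpa using (h1.div_const c).add h2
  have : dist z v ≤ 0 := ge_of_tendsto hto (Filter.Eventually.of_forall hbound)
  exact dist_le_zero.1 this

lemma ekeland_core {X : Type*} [MetricSpace X] [CompleteSpace X]
    (f : X → EReal) (hlsc : LowerSemicontinuous f) (hbot : ∀ z, f z ≠ ⊥)
    (xbar x0 : X) (ρ B c : ℝ) (hρ : 0 < ρ) (hc : 0 < c)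
    (hlow : ∀ z, dist z xbar ≤ ρ → ((B : ℝ) : EReal) ≤ f z)
    (hx0ball : dist x0 xbar ≤ ρ / 4)
    (hx0top : f x0 ≠ ⊤)
    (hgap : (f x0).toReal - B ≤ c * ρ / 2) :
    ∃ v, dist v xbar < ρ ∧ ((B : ℝ) : EReal) ≤ f v ∧ f v ≠ ⊤ ∧
      f v + ((c * dist v x0 : ℝ) : EReal) ≤ f x0 ∧
      ∀ᶠ z in 𝓝 v, f v ≤ f z + ((c * dist z v : ℝ) : EReal) := by
  classical
  set A0 : ℝ := (f x0).toReal with hA0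
  set K : ℝ := A0 + 1 with hK
  have hfx0 : f x0 = ((A0 : ℝ) : EReal) := (EReal.coe_toReal hx0top (hbot x0)).symm
  have hx0mem : dist x0 xbar ≤ ρ := by linarith
  have hBA0 : B ≤ A0 := by
    have := hlow x0 hx0mem
    rw [hfx0] at this
    exact_mod_cast this
  set F : X → EReal := fun z => min (f z) ((K : ℝ) : EReal) with hF
  have hFlsc : LowerSemicontinuous F := by
    intro x y hy
    have h1 : y < f x := lt_of_lt_of_le hy (min_le_left _ _)
    have h2 : y < ((K : ℝ) : EReal) := lt_of_lt_of_le hy (min_le_right _ _)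
    filter_upwards [hlsc x y h1] with z hz
    exact lt_min hz h2
  have hFfin : ∀ z, dist z xbar ≤ ρ → F z ≠ ⊥ ∧ F z ≠ ⊤ := by
    intro z hz
    constructor
    · rcases min_cases (f z) ((K : ℝ) : EReal) with ⟨h, -⟩ | ⟨h, -⟩ <;> rw [hF] <;> simp [h]
      exact hbot z
    · exact ne_top_of_le_ne_top (EReal.coe_ne_top K) (min_le_right _ _)
  have hFB : ∀ z, dist z xbar ≤ ρ → ((B : ℝ) : EReal) ≤ F z := by
    intro z hz
    exact le_min (hlow z hz) (by exact_mod_cast (by linarith : B ≤ K))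
  set Y : Set X := Metric.closedBall xbar ρ with hY
  haveI : CompleteSpace Y := Metric.isClosed_closedBall.completeSpace_coe
  set g : Y → ℝ := fun z => (F z.1).toReal with hg
  have hmem : ∀ z : Y, dist z.1 xbar ≤ ρ := fun z => z.2
  have hFsub : LowerSemicontinuous fun z : Y => F z.1 :=
    LowerSemicontinuous.comp hFlsc continuous_subtype_val
  have hglsc : LowerSemicontinuous g := by
    intro z t ht
    have hfin := hFfin z.1 (hmem z)
    have h1 : ((t : ℝ) : EReal) < F z.1 := by
      rw [← EReal.coe_toReal hfin.2 hfin.1]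
      exact_mod_cast ht
    filter_upwards [hFsub z _ h1] with w hw
    have hfinw := hFfin w.1 (hmem w)
    have h2 : ((t : ℝ) : EReal) < (((F w.1).toReal : ℝ) : EReal) := by
      rw [EReal.coe_toReal hfinw.2 hfinw.1]; exact hw
    exact_mod_cast h2
  have hgB : ∀ z : Y, B ≤ g z := by
    intro z
    have h1 := hFB z.1 (hmem z)
    have hfin := hFfin z.1 (hmem z)
    have := EReal.toReal_le_toReal h1 (EReal.coe_ne_bot B) hfin.2
    simpa using this
  set x0' : Y := ⟨x0, hx0mem⟩ with hx0'
  have hFx0 : F x0 = f x0 := by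
    rw [hF]
    refine min_eq_left ?_
    rw [hfx0]
    exact_mod_cast (by linarith : A0 ≤ K)
  have hgx0 : g x0' = A0 := by
    simp only [hg, hx0', hFx0, hfx0]
    simp
  obtain ⟨v, hv1, hv2⟩ := ekeland_real g hglsc B hgB c hc x0'
  rw [Subtype.dist_eq, hgx0] at hv1
  have hdist0 : (0:ℝ) ≤ dist v.1 x0 := dist_nonneg
  have hgvA : g v ≤ A0 - c * dist v.1 x0 := by linarith
  have hdvx0 : dist v.1 x0 ≤ ρ / 2 := by
    have h1 : B ≤ g v := hgB v
    nlinarith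
  have hvball : dist v.1 xbar < ρ := by
    have := dist_triangle v.1 x0 xbar
    linarith
  have hfinv := hFfin v.1 (hmem v)
  have hgveq : F v.1 = ((g v : ℝ) : EReal) := (EReal.coe_toReal hfinv.2 hfinv.1).symm
  have hFvK : F v.1 < ((K : ℝ) : EReal) := by
    rw [hgveq]
    exact_mod_cast (by nlinarith : g v < K)
  have hfveq : F v.1 = f v.1 := by
    rcases le_or_gt (((K : ℝ) : EReal)) (f v.1) with h | h
    · exfalso; rw [hF] at hFvK; simp only [min_eq_right h] at hFvK; exact lt_irrefl _ hFvK
    · exact min_eq_left h.le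
  have hfvtop : f v.1 ≠ ⊤ := hfveq ▸ hfinv.2
  have hfvB : ((B : ℝ) : EReal) ≤ f v.1 := hfveq ▸ hFB v.1 (hmem v)
  have hfvco : f v.1 = ((g v : ℝ) : EReal) := hfveq ▸ hgveq
  refine ⟨v.1, hvball, hfvB, hfvtop, ?_, ?_⟩
  · rw [hfvco, hfx0]
    exact_mod_cast hv1
  · have hr0 : 0 < ρ - dist v.1 xbar := by linarith
    rw [Metric.eventually_nhds_iff]
    refine ⟨ρ - dist v.1 xbar, hr0, fun {z} hz => ?_⟩
    have hzball : dist z xbar ≤ ρ := by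
      have := dist_triangle z v.1 xbar
      linarith
    by_cases hzv : z = v.1
    · subst hzv
      simp
    · set z' : Y := ⟨z, hzball⟩ with hz'
      have hz'v : z' ≠ v := fun h => hzv (congrArg Subtype.val h)
      have hgt : g v < g z' + c * dist z v.1 := by
        by_contra hle
        push_neg at hle
        exact hz'v (hv2 z' (by rwa [Subtype.dist_eq]))
      have hfinz := hFfin z hzball
      have hFz : F z = ((g z' : ℝ) : EReal) := (EReal.coe_toReal hfinz.2 hfinz.1).symm
      have h1 : f v.1 < ((g z' : ℝ) : EReal) + ((c * dist z v.1 : ℝ) : EReal) := by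
        rw [hfvco, ← EReal.coe_add]
        exact_mod_cast hgt
      have h2 : ((g z' : ℝ) : EReal) ≤ f z := hFz ▸ min_le_left _ _
      exact le_of_lt (lt_of_lt_of_le h1 (add_le_add_left h2 _))

set_option maxHeartbeats 1000000 in
/-- Linear growth theorem. -/
theorem linear_growth {X : Type*} [MetricSpace X] [CompleteSpace X]
    (f : X → EReal) (hlsc : LowerSemicontinuous f) (hbot : ∀ z, f z ≠ ⊥)
    (xbar : X) (hfin : f xbar ≠ ⊤) (hslope : slopeM f xbar = 0)
    (M : Set X) (hM : Identifiable f M xbar)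
    (ε : ℝ) (hε : 0 ≤ ε) (hεlt : ENNReal.ofReal ε < identModulus f M xbar)
    (x : ℕ → X) (hx : Tendsto x atTop (𝓝 xbar))
    (hfx : Tendsto (fun r => f (x r)) atTop (𝓝 (f xbar))) :
    ∃ v : ℕ → X, Tendsto v atTop (𝓝 xbar) ∧ (∀ r, v r ∈ M) ∧
      Tendsto (fun r => f (v r)) atTop (𝓝 (f xbar)) ∧
      ∀ᶠ r in atTop, f (v r) + ((ε * dist (v r) (x r) : ℝ) : EReal) ≤ f (x r) := by
  classical
  obtain ⟨hMclosed, hxbarM, hmodpos⟩ := hM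
  set A : ℝ := (f xbar).toReal with hA
  have hfxbar : f xbar = ((A : ℝ) : EReal) := (EReal.coe_toReal hfin (hbot xbar)).symm
  -- choose ε' with ε < ε' and ofReal ε' < identModulus
  obtain ⟨m, hm1, hm2⟩ := exists_between hεlt
  have hmtop : m ≠ ⊤ := hm2.ne_top
  set ε' : ℝ := m.toReal with hε'def
  have hmeq : ENNReal.ofReal ε' = m := ENNReal.ofReal_toReal hmtop
  have hεε' : ε < ε' := by
    by_contra h
    push_neg at h
    exact absurd hm1 (not_lt.2 (by rw [← hmeq]; exact ENNReal.ofReal_le_ofReal h))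
  have hε'pos : 0 < ε' := lt_of_le_of_lt hε hεε'
  -- slope zero: get c₀ < ε'/8 with local near-minimality
  have hsinf : sInf {δ : ℝ≥0∞ | ∃ c : ℝ, 0 < c ∧ δ = ENNReal.ofReal c ∧
      ∀ᶠ z in 𝓝 xbar, f xbar ≤ f z + ((c * dist z xbar : ℝ) : EReal)} = 0 := by
    have h := hslope
    rwa [slopeM, if_neg hfin] at h
  have hlt : sInf {δ : ℝ≥0∞ | ∃ c : ℝ, 0 < c ∧ δ = ENNReal.ofReal c ∧
      ∀ᶠ z in 𝓝 xbar, f xbar ≤ f z + ((c * dist z xbar : ℝ) : EReal)}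
      < ENNReal.ofReal (ε' / 8) := by
    rw [hsinf]
    exact ENNReal.ofReal_pos.2 (by linarith)
  obtain ⟨δ, hδmem, hδlt⟩ := sInf_lt_iff.1 hlt
  obtain ⟨c₀, hc₀pos, rfl, hev0⟩ := hδmem
  have hc₀lt : c₀ < ε' / 8 :=
    (ENNReal.ofReal_lt_ofReal_iff (by linarith)).1 hδlt
  rw [Metric.eventually_nhds_iff] at hev0
  obtain ⟨ρs', hρs'pos, hev0⟩ := hev0
  set ρs : ℝ := ρs' / 2 with hρsdef
  have hρspos : 0 < ρs := by positivity
  have hlowball : ∀ ρ : ℝ, 0 < ρ → ρ ≤ ρs → ∀ z, dist z xbar ≤ ρ →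
      ((A - ε' / 8 * ρ : ℝ) : EReal) ≤ f z := by
    intro ρ hρ hρle z hz
    rcases eq_or_ne (f z) ⊤ with h | h
    · rw [h]; exact le_top
    have hzfin : f z = (((f z).toReal : ℝ) : EReal) := (EReal.coe_toReal h (hbot z)).symm
    have h1 := hev0 (show dist z xbar < ρs' by
      have : ρs < ρs' := by rw [hρsdef]; linarith
      linarith)
    rw [hfxbar, hzfin, ← EReal.coe_add] at h1
    have h2 : A ≤ (f z).toReal + c₀ * dist z xbar := by exact_mod_cast h1
    have h3 : c₀ * dist z xbar ≤ ε' / 8 * ρ := by nlinarith [dist_nonneg (x := z) (y := xbar)]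
    rw [hzfin]
    exact_mod_cast (by linarith : A - ε' / 8 * ρ ≤ (f z).toReal)
  -- modulus: eventual slope lower bound
  have hmodev : ∀ᶠ z in (𝓝[Mᶜ] xbar ⊓ Filter.comap f (𝓝 (f xbar))),
      ENNReal.ofReal ε' < slopeM f z := by
    rw [hmeq]
    exact eventually_lt_of_lt_liminf hm2
  rw [Filter.eventually_inf] at hmodev
  obtain ⟨Sf, hSf, Tf, hTf, hST⟩ := hmodev
  rw [mem_nhdsWithin] at hSf
  obtain ⟨W, hWopen, hWx, hWs⟩ := hSf
  obtain ⟨V, hV, hVt⟩ := Filter.mem_comap.1 hTf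
  have hVpre : (fun s : ℝ => ((s : ℝ) : EReal)) ⁻¹' V ∈ 𝓝 A := by
    have hcont : Tendsto (fun s : ℝ => ((s : ℝ) : EReal)) (𝓝 A) (𝓝 (f xbar)) := by
      rw [hfxbar]
      exact EReal.tendsto_coe.2 tendsto_id
    exact hcont hV
  obtain ⟨δV, hδVpos, hδVsub⟩ := Metric.mem_nhds_iff.1 hVpre
  obtain ⟨ρW, hρWpos, hρWsub⟩ := Metric.isOpen_iff.1 hWopen xbar hWx
  have hkey : ∀ z, dist z xbar < ρW → (∃ sV : ℝ, f z = ((sV : ℝ) : EReal) ∧ |sV - A| < δV) →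
      slopeM f z ≤ ENNReal.ofReal ε' → z ∈ M := by
    rintro z hz ⟨sV, hfz, hsV⟩ hslopez
    by_contra hzM
    have h1 : z ∈ Sf := hWs ⟨hρWsub hz, hzM⟩
    have h2 : z ∈ Tf := by
      apply hVt
      rw [Set.mem_preimage, hfz]
      exact hδVsub (by simpa [Real.dist_eq] using hsV)
    exact absurd (hST z ⟨h1, h2⟩) (not_lt.2 hslopez)
  -- radii
  set ρ₀ : ℝ := min ρs (min (ρW / 2) (δV / ε')) with hρ₀def
  have hρ₀pos : 0 < ρ₀ := by
    apply lt_min hρspos (lt_min (by positivity) (by positivity))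
  have hρ₀s : ρ₀ ≤ ρs := min_le_left _ _
  have hρ₀W : ρ₀ ≤ ρW / 2 := le_trans (min_le_right _ _) (min_le_left _ _)
  have hρ₀V : ρ₀ ≤ δV / ε' := le_trans (min_le_right _ _) (min_le_right _ _)
  set sq : ℕ → ℝ := fun r => max ((f (x r)).toReal - A) 0 with hsqdef
  set tq : ℕ → ℝ := fun r => 4 * dist (x r) xbar + 8 / ε' * sq r + 1 / (r + 1) with htqdef
  set ρq : ℕ → ℝ := fun r => min ρ₀ (tq r) with hρqdef
  have hsqnn : ∀ r, 0 ≤ sq r := fun r => le_max_right _ _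
  have htqpos : ∀ r, 0 < tq r := by
    intro r
    have h1 : (0:ℝ) < 1 / (r + 1) := by positivity
    have h2 : (0:ℝ) ≤ 8 / ε' * sq r := by positivity
    have h3 : (0:ℝ) ≤ dist (x r) xbar := dist_nonneg
    simp only [htqdef]
    linarith
  have hρqpos : ∀ r, 0 < ρq r := fun r => lt_min hρ₀pos (htqpos r)
  -- limits
  have hd0 : Tendsto (fun r => dist (x r) xbar) atTop (𝓝 0) :=
    tendsto_iff_dist_tendsto_zero.1 hx
  have htR : Tendsto (fun r => (f (x r)).toReal) atTop (𝓝 A) :=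
    (EReal.tendsto_toReal hfin (hbot xbar)).comp hfx
  have hsq0 : Tendsto sq atTop (𝓝 0) := by
    have h1 : Tendsto (fun r => (f (x r)).toReal - A) atTop (𝓝 0) := by
      simpa using htR.sub_const A
    have := h1.max (tendsto_const_nhds (x := (0:ℝ)) (f := atTop))
    simpa using this
  have htq0 : Tendsto tq atTop (𝓝 0) := by
    have h1 : Tendsto (fun r : ℕ => 1 / ((r : ℝ) + 1)) atTop (𝓝 0) :=
      tendsto_one_div_add_atTop_nhds_zero_nat
    have h2 := ((hd0.const_mul 4).add (hsq0.const_mul (8 / ε'))).add h1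
    rw [htqdef]
    simpa using h2
  have hρq0 : Tendsto ρq atTop (𝓝 0) := by
    apply squeeze_zero (fun r => (hρqpos r).le) (fun r => min_le_right _ _) htq0
  have hρqρ₀ : ∀ r, ρq r ≤ ρ₀ := fun r => min_le_left _ _
  have hρqmin : ∀ r, tq r ≤ ρ₀ → ρq r = tq r := fun r h => min_eq_right h
  have hsqub : ∀ r, (f (x r)).toReal - A ≤ sq r := fun r => le_max_left _ _
  have htqlb1 : ∀ r, 8 / ε' * sq r ≤ tq r := by
    intro r
    have h4 : (0:ℝ) < 1 / ((r:ℝ) + 1) := by positivity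
    have h5 : (0:ℝ) ≤ dist (x r) xbar := dist_nonneg
    simp only [htqdef]; linarith
  have htqlb2 : ∀ r, 4 * dist (x r) xbar ≤ tq r := by
    intro r
    have h4 : (0:ℝ) < 1 / ((r:ℝ) + 1) := by positivity
    have h5 : (0:ℝ) ≤ 8 / ε' * sq r := mul_nonneg (by positivity) (hsqnn r)
    simp only [htqdef]; linarith
  clear_value sq tq ρq
  clear htqdef hsqdef hρqdef
  -- main eventual claim
  set P : ℕ → Prop := fun r => ∃ v, v ∈ M ∧ dist v xbar ≤ ρq r ∧
    ((A - ε' / 8 * ρq r : ℝ) : EReal) ≤ f v ∧ f v ≤ f (x r) ∧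
    f v + ((ε * dist v (x r) : ℝ) : EReal) ≤ f (x r) with hPdef
  have hP : ∀ᶠ r in atTop, P r := by
    have hftop : ∀ᶠ r in atTop, f (x r) ≠ ⊤ := by
      have : ∀ᶠ r in atTop, f (x r) ∈ Set.Iio (⊤ : EReal) :=
        hfx.eventually (Iio_mem_nhds (by rw [hfxbar]; exact EReal.coe_lt_top A))
      exact this.mono fun r hr => ne_top_of_lt hr
    have htqsmall : ∀ᶠ r in atTop, tq r ≤ ρ₀ :=
      htq0.eventually (eventually_le_nhds hρ₀pos)
    filter_upwards [hftop, htqsmall] with r h1 h2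
    have hρqeq : ρq r = tq r := hρqmin r h2
    have hsqb : sq r ≤ ε' / 8 * ρq r := by
      have h3 := htqlb1 r
      rw [div_mul_eq_mul_div, div_le_iff₀ hε'pos] at h3
      have h3' : ε' / 8 * ρq r = tq r * ε' / 8 := by rw [hρqeq]; ring
      linarith
    obtain ⟨v, hvball, hvB, hvtop, hvineq, hvslope⟩ :=
      ekeland_core f hlsc hbot xbar (x r) (ρq r) (A - ε' / 8 * ρq r) ε'
        (hρqpos r) hε'pos
        (hlowball (ρq r) (hρqpos r) (le_trans (hρqρ₀ r) hρ₀s))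
        (by
          have h6 := htqlb2 r
          rw [hρqeq]; linarith)
        h1
        (by
          have h7 := hsqub r
          have h8 : (0:ℝ) ≤ ε' * ρq r := mul_nonneg hε'pos.le (hρqpos r).le
          have h9 : ε' / 8 * ρq r = ε' * ρq r / 8 := by ring
          linarith)
    -- derived facts about v
    have hfvne : f v ≠ ⊥ := hbot v
    have hfveq : f v = (((f v).toReal : ℝ) : EReal) := (EReal.coe_toReal hvtop hfvne).symm
    have hdvnn : (0:ℝ) ≤ dist v (x r) := dist_nonneg
    have hfvle : f v ≤ f (x r) := by
      calc f v = f v + ((0:ℝ) : EReal) := by simp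
        _ ≤ f v + ((ε' * dist v (x r) : ℝ) : EReal) := by
            apply add_le_add_right
            exact_mod_cast (by positivity : (0:ℝ) ≤ ε' * dist v (x r))
        _ ≤ f (x r) := hvineq
    have hlb : A - ε' / 8 * ρq r ≤ (f v).toReal := by
      rw [hfveq] at hvB
      exact_mod_cast hvB
    have hub : (f v).toReal ≤ A + ε' / 8 * ρq r := by
      have h9 : f v ≤ (((f (x r)).toReal : ℝ) : EReal) := by
        rw [← EReal.coe_toReal h1 (hbot (x r))] at hfvle
        exact hfvle
      rw [hfveq] at h9
      have h10 : (f v).toReal ≤ (f (x r)).toReal := by exact_mod_cast h9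
      have h7 := hsqub r
      have := hsqb
      linarith
    have hslopev : slopeM f v ≤ ENNReal.ofReal ε' := by
      rw [slopeM, if_neg hvtop]
      exact sInf_le ⟨ε', hε'pos, rfl, hvslope⟩
    have hvM : v ∈ M := by
      apply hkey v
      · calc dist v xbar < ρq r := hvball
          _ ≤ ρW / 2 := le_trans (hρqρ₀ r) hρ₀W
          _ < ρW := by linarith
      · refine ⟨(f v).toReal, hfveq, ?_⟩
        have h11 : ε' / 8 * ρq r ≤ δV / 8 := by
          have h12 : ρq r ≤ δV / ε' := le_trans (hρqρ₀ r) hρ₀V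
          rw [div_mul_eq_mul_div, div_le_div_iff₀ (by norm_num) (by norm_num : (0:ℝ) < 8)]
          calc ε' * ρq r * 8 ≤ ε' * (δV / ε') * 8 := by gcongr
            _ = δV * 8 := by field_simp
        rw [abs_sub_lt_iff]
        constructor <;> linarith
      · exact hslopev
    refine ⟨v, hvM, hvball.le, hvB, hfvle, ?_⟩
    calc f v + ((ε * dist v (x r) : ℝ) : EReal)
        ≤ f v + ((ε' * dist v (x r) : ℝ) : EReal) := by
          apply add_le_add_right
          exact_mod_cast mul_le_mul_of_nonneg_right hεε'.le hdvnn
      _ ≤ f (x r) := hvineq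
  -- construct the sequence
  set v : ℕ → X := fun r => if h : P r then h.choose else xbar with hvdef
  have hvspec : ∀ r, P r → v r ∈ M ∧ dist (v r) xbar ≤ ρq r ∧
      ((A - ε' / 8 * ρq r : ℝ) : EReal) ≤ f (v r) ∧ f (v r) ≤ f (x r) ∧
      f (v r) + ((ε * dist (v r) (x r) : ℝ) : EReal) ≤ f (x r) := by
    intro r hr
    have : v r = hr.choose := dif_pos hr
    rw [this]
    exact hr.choose_spec
  have hvM : ∀ r, v r ∈ M := by
    intro r
    by_cases h : P r
    · exact (hvspec r h).1
    · simp only [hvdef, dif_neg h]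
      exact hxbarM
  refine ⟨v, ?_, hvM, ?_, ?_⟩
  · rw [tendsto_iff_dist_tendsto_zero]
    apply squeeze_zero' (Filter.Eventually.of_forall fun r => dist_nonneg)
      (hP.mono fun r hr => (hvspec r hr).2.1) hρq0
  · have hlow' : Tendsto (fun r => ((A - ε' / 8 * ρq r : ℝ) : EReal)) atTop (𝓝 (f xbar)) := by
      rw [hfxbar]
      apply EReal.tendsto_coe.2
      have := (hρq0.const_mul (ε' / 8)).const_sub A
      simpa using this
    exact tendsto_of_tendsto_of_tendsto_of_le_of_le' hlow' hfx
      (hP.mono fun r hr => (hvspec r hr).2.2.1)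
      (hP.mono fun r hr => (hvspec r hr).2.2.2.1)
  · exact hP.mono fun r hr => (hvspec r hr).2.2.2.2
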